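/- Let n be a positive integer and B, U, V, Σ ∈ M_n(ℂ) with U and V unitary, Σ a diagonal matrix whose diagonal entries σ_0, …, σ_{n−1} are nonnegative real numbers, and B = U·Σ·Vᴴ. Then for every unitary D ∈ M_n(ℂ): Re( trace(Dᴴ·B) ) ≤ Σ_{i<n} σ_i, and equality holds for D = U·Vᴴ. -/

import Mathlib

open Matrix

lemma diag_re_le_one {n : ℕ} (W : Matrix (Fin n) (Fin n) ℂ) (hW : Wᴴ * W = 1)
    (i : Fin n) : (W i i).re ≤ 1 := by
  have h1 : ∑ k, Complex.normSq (W k i) = 1 := by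
    have h := congrFun (congrFun hW i) i
    simp only [Matrix.mul_apply, Matrix.conjTranspose_apply, Matrix.one_apply_eq] at h
    have h2 : ∑ k, (Complex.normSq (W k i) : ℂ) = 1 := by
      rw [← h]; congr 1; ext k
      rw [Complex.star_def, mul_comm, Complex.mul_conj]
    have := congrArg Complex.re h2
    simpa using this
  have h3 : Complex.normSq (W i i) ≤ 1 := by
    rw [← h1]
    exact Finset.single_le_sum (f := fun k => Complex.normSq (W k i))
      (fun k _ => Complex.normSq_nonneg _) (Finset.mem_univ i)
  have h4 : (W i i).re ≤ ‖W i i‖ := Complex.re_le_norm _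
  have h5 : (‖W i i‖) ^ 2 = Complex.normSq (W i i) := Complex.sq_norm _
  nlinarith [norm_nonneg (W i i)]

theorem trace_inequality_svd {n : ℕ} (hn : 0 < n)
    (B U V : Matrix (Fin n) (Fin n) ℂ) (σ : Fin n → ℝ) (hσ : ∀ i, 0 ≤ σ i)
    (hU : Uᴴ * U = 1) (hV : Vᴴ * V = 1)
    (hB : B = U * Matrix.diagonal (fun i => (σ i : ℂ)) * Vᴴ) :
    (∀ D : Matrix (Fin n) (Fin n) ℂ, Dᴴ * D = 1 →
        ((Dᴴ * B).trace).re ≤ ∑ i, σ i) ∧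
      (((U * Vᴴ)ᴴ * B).trace).re = ∑ i, σ i := by
  have hV' : V * Vᴴ = 1 := mul_eq_one_comm.mp hV
  constructor
  · intro D hD
    have hD' : D * Dᴴ = 1 := mul_eq_one_comm.mp hD
    set W := Vᴴ * Dᴴ * U with hWdef
    have hW : Wᴴ * W = 1 := by
      have : Wᴴ * W = Uᴴ * (D * ((V * Vᴴ) * (Dᴴ * U))) := by
        simp only [hWdef, Matrix.conjTranspose_mul, Matrix.conjTranspose_conjTranspose]
        noncomm_ring
      rw [this, hV', Matrix.one_mul, ← Matrix.mul_assoc D Dᴴ U,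
        hD', Matrix.one_mul, hU]
    have htr : (Dᴴ * B).trace = ∑ i, W i i * σ i := by
      rw [hB]
      have : Dᴴ * (U * Matrix.diagonal (fun i => (σ i : ℂ)) * Vᴴ)
          = (Dᴴ * U * Matrix.diagonal (fun i => (σ i : ℂ))) * Vᴴ := by
        noncomm_ring
      rw [this, Matrix.trace_mul_comm]
      have : Vᴴ * (Dᴴ * U * Matrix.diagonal (fun i => (σ i : ℂ)))
          = W * Matrix.diagonal (fun i => (σ i : ℂ)) := by
        simp only [hWdef]; noncomm_ring
      rw [this, Matrix.trace]
      congr 1; ext i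
      simp [Matrix.diag, Matrix.mul_diagonal]
    rw [htr]
    have hre : (∑ i, W i i * (σ i : ℂ)).re = ∑ i, (W i i).re * σ i := by
      rw [Complex.re_sum]
      congr 1; ext i
      simp [Complex.mul_re]
    rw [hre]
    apply Finset.sum_le_sum
    intro i _
    have := diag_re_le_one W hW i
    nlinarith [hσ i]
  · have : (U * Vᴴ)ᴴ * B = V * Matrix.diagonal (fun i => (σ i : ℂ)) * Vᴴ := by
      rw [hB]
      have h : (U * Vᴴ)ᴴ * (U * Matrix.diagonal (fun i => (σ i : ℂ)) * Vᴴ)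
          = V * ((Uᴴ * U) * Matrix.diagonal (fun i => (σ i : ℂ))) * Vᴴ := by
        simp only [Matrix.conjTranspose_mul, Matrix.conjTranspose_conjTranspose]
        noncomm_ring
      rw [h, hU, Matrix.one_mul]
    rw [this, Matrix.mul_assoc, Matrix.trace_mul_comm, Matrix.mul_assoc, hV,
      Matrix.mul_one, Matrix.trace_diagonal]
    simp
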